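/- arXiv:1506.01362 — 2 statements merged into one kernel-verified Lean document; each statement's English description precedes it below -/
import Mathlib

section
/- Let $H$ be a connected graph on $[t]$ and $H_1, \ldots, H_r$ connected graphs on disjoint vertex sets $[n_1], \ldots, [n_r]$ with $r \geq 2$, and let $G = H * (\bigsqcup_{i=1}^r H_i)$. Then $c_G(T) = |T| + 1$ for all $T \in \mathcal{C}(G)$ if and only if $H$ is complete, $r = t + 1$, and $c_{H_i}(T_i) = |T_i| + 1$ for all $T_i \in \mathcal{C}(H_i)$, $i = 1, \ldots, r$. -/
open SimpleGraph Set

/-- Number of connected components of the induced subgraph of `G` on `s`. -/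
noncomputable def nc {V : Type*} (G : SimpleGraph V) (s : Set V) : ℕ :=
  Nat.card (G.induce s).ConnectedComponent

/-- `T` has the cut point property for `G`: every `i ∈ T` is a cut point of the
induced subgraph on `Tᶜ ∪ {i}` (removing `i` increases the number of components). -/
def CutPointProperty {V : Type*} (G : SimpleGraph V) (T : Set V) : Prop :=
  ∀ i ∈ T, nc G (Tᶜ ∪ {i}) < nc G Tᶜ

/-- The join `G₁ * G₂` of two graphs on disjoint vertex sets. -/
def joinGraph {V₁ V₂ : Type*} (G₁ : SimpleGraph V₁) (G₂ : SimpleGraph V₂) :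
    SimpleGraph (V₁ ⊕ V₂) where
  Adj v w :=
    match v, w with
    | Sum.inl a, Sum.inl b => G₁.Adj a b
    | Sum.inr a, Sum.inr b => G₂.Adj a b
    | Sum.inl _, Sum.inr _ => True
    | Sum.inr _, Sum.inl _ => True
  symm := by constructor; rintro (a | a) (b | b) h <;> simp_all <;> exact h.symm
  loopless := by constructor; rintro (a | a) h <;> simp_all

/-- Disjoint union of an indexed family of graphs. -/
def sigmaGraph {ι : Type*} {V : ι → Type*} (G : ∀ i, SimpleGraph (V i)) :
    SimpleGraph (Σ i, V i) where
  Adj v w := ∃ h : v.1 = w.1, (G w.1).Adj (h ▸ v.2) w.2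
  symm := by
    constructor
    rintro ⟨i, a⟩ ⟨j, b⟩ ⟨h, hab⟩
    dsimp at h hab ⊢
    subst h
    exact ⟨rfl, hab.symm⟩
  loopless := by
    constructor
    rintro ⟨i, a⟩ ⟨h, hab⟩
    dsimp at h hab
    exact (G i).irrefl hab
/-- The corona `H ⊙ H'`: one copy of `H'` for each vertex `v` of `H`,
with every vertex of the copy joined to `v`. -/
def coronaGraph {V₁ V₂ : Type*} (H : SimpleGraph V₁) (H' : SimpleGraph V₂) :
    SimpleGraph (V₁ ⊕ V₁ × V₂) where
  Adj v w :=
    match v, w with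
    | Sum.inl a, Sum.inl b => H.Adj a b
    | Sum.inl a, Sum.inr p => a = p.1
    | Sum.inr p, Sum.inl b => p.1 = b
    | Sum.inr p, Sum.inr q => p.1 = q.1 ∧ H'.Adj p.2 q.2
  symm := by
    constructor
    rintro (a | p) (b | q) h <;> dsimp at h ⊢
    · exact h.symm
    · exact h.symm
    · exact h.symm
    · exact ⟨h.1.symm, h.2.symm⟩
  loopless := by constructor; rintro (a | p) h <;> simp_all

/-- The whisker graph `W(H)`: a pendant vertex attached to each vertex of `H`. -/
def whiskerGraph {V : Type*} (H : SimpleGraph V) : SimpleGraph (V ⊕ V) where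
  Adj v w :=
    match v, w with
    | Sum.inl a, Sum.inl b => H.Adj a b
    | Sum.inl a, Sum.inr b => a = b
    | Sum.inr a, Sum.inl b => a = b
    | Sum.inr _, Sum.inr _ => False
  symm := by constructor; rintro (a | a) (b | b) h <;> simp_all; exact h.symm
  loopless := by constructor; rintro (a | a) h <;> simp_all

/-- `F` is (the vertex set of) a maximal clique of `G`. -/
def MaxClique {V : Type*} (G : SimpleGraph V) (F : Set V) : Prop :=
  Maximal G.IsClique F

/-- A graph is chordal if every cycle of length at least 4 has a chord. -/
def IsChordal {V : Type*} (G : SimpleGraph V) : Prop :=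
  ∀ (n : ℕ), 4 ≤ n → ∀ c : ℕ → V, Set.InjOn c (Set.Iio n) →
    (∀ i < n, G.Adj (c i) (c ((i + 1) % n))) →
    ∃ i < n, ∃ j < n, j ≠ i ∧ j ≠ (i + 1) % n ∧ i ≠ (j + 1) % n ∧ G.Adj (c i) (c j)

/-- A generalized block graph: a connected chordal graph in which any three distinct
maximal cliques with nonempty common intersection have all pairwise intersections equal. -/
def GenBlockGraph {V : Type*} (G : SimpleGraph V) : Prop :=
  G.Connected ∧ IsChordal G ∧
    ∀ F₁ F₂ F₃ : Set V, MaxClique G F₁ → MaxClique G F₂ → MaxClique G F₃ →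
      F₁ ≠ F₂ → F₁ ≠ F₃ → F₂ ≠ F₃ → (F₁ ∩ F₂ ∩ F₃).Nonempty →
      F₁ ∩ F₂ = F₁ ∩ F₃ ∧ F₁ ∩ F₂ = F₂ ∩ F₃

/-- `A` is a cut set of `G`: deleting `A` increases the number of connected components. -/
def IsCutSet {V : Type*} (G : SimpleGraph V) (A : Set V) : Prop :=
  nc G Set.univ < nc G Aᶜ

/-- `A` is an inclusion-minimal cut set of `G`. -/
def IsMinCutSet {V : Type*} (G : SimpleGraph V) (A : Set V) : Prop :=
  IsCutSet G A ∧ ∀ B ⊂ A, ¬ IsCutSet G B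

/-- `A` is a `t`-minimal cut set of `G`: a minimal cut set which is the common
intersection of exactly `t` maximal cliques of `G` and disjoint from all other
maximal cliques. -/
def IsTMinCut {V : Type*} (G : SimpleGraph V) (t : ℕ) (A : Set V) : Prop :=
  IsMinCutSet G A ∧
  {F : Set V | MaxClique G F ∧ A ⊆ F}.ncard = t ∧
  ⋂₀ {F : Set V | MaxClique G F ∧ A ⊆ F} = A ∧
  ∀ F : Set V, MaxClique G F → ¬ A ⊆ F → F ∩ A = ∅

/-- `B` is a branch of the facet `F` in the clique complex of `G`. -/
def IsBranch {V : Type*} (G : SimpleGraph V) (F B : Set V) : Prop :=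
  MaxClique G B ∧ B ≠ F ∧ ∀ H : Set V, MaxClique G H → H ≠ F → H ∩ F ⊆ B ∩ F

/-- `F` is a leaf of the clique complex of `G`. -/
def IsLeafClique {V : Type*} (G : SimpleGraph V) (F : Set V) : Prop :=
  MaxClique G F ∧ ((∀ F' : Set V, MaxClique G F' → F' = F) ∨ ∃ B, IsBranch G F B)

section Aux

instance myCCFinite {V : Type*} [Finite V] (G : SimpleGraph V) :
    Finite G.ConnectedComponent :=
  Quot.finite _

variable {V : Type*} {G : SimpleGraph V}

lemma card_cc_eq_one (h : G.Connected) : Nat.card G.ConnectedComponent = 1 := by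
  haveI := h.preconnected.subsingleton_connectedComponent
  haveI : Nonempty G.ConnectedComponent := h.nonempty.map G.connectedComponentMk
  exact Nat.card_unique

lemma nc_eq_one_of_connected {s : Set V} (h : (G.induce s).Connected) : nc G s = 1 :=
  card_cc_eq_one h

lemma nc_univ_eq_one (h : G.Connected) : nc G Set.univ = 1 := by
  unfold nc
  rw [Nat.card_congr (induceUnivIso G).connectedComponentEquiv]
  exact card_cc_eq_one h

lemma nc_empty (G : SimpleGraph V) : nc G (∅ : Set V) = 0 := by
  haveI : IsEmpty ((G.induce (∅ : Set V)).ConnectedComponent) :=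
    ⟨fun c => ConnectedComponent.ind (fun v => absurd v.2 (Set.notMem_empty _)) c⟩
  simp [nc, Nat.card_of_isEmpty]

lemma nc_pos [Finite V] {s : Set V} (hs : s.Nonempty) : 1 ≤ nc G s := by
  haveI : Nonempty ((G.induce s).ConnectedComponent) :=
    ⟨(G.induce s).connectedComponentMk ⟨hs.some, hs.some_mem⟩⟩
  exact Nat.card_pos

lemma nc_le_ncard [Finite V] (G : SimpleGraph V) (s : Set V) : nc G s ≤ s.ncard := by
  rw [← Nat.card_coe_set_eq]
  exact Nat.card_le_card_of_surjective (G.induce s).connectedComponentMk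
    (fun c => Quot.exists_rep c)

lemma nc_congr {V' : Type*} {G' : SimpleGraph V'} {s : Set V} {s' : Set V'}
    (e : G.induce s ≃g G'.induce s') : nc G s = nc G' s' :=
  Nat.card_congr e.connectedComponentEquiv

lemma two_le_nc [Finite V] {s : Set V} {u v : ↥s}
    (h : ¬(G.induce s).Reachable u v) : 2 ≤ nc G s := by
  have hne : (G.induce s).connectedComponentMk u ≠ (G.induce s).connectedComponentMk v :=
    fun he => h (ConnectedComponent.exact he)
  have : Nontrivial ((G.induce s).ConnectedComponent) := ⟨_, _, hne⟩
  exact Finite.one_lt_card_iff_nontrivial.mpr this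

lemma two_le_nc_pair [Finite V] {a b : V} (hab : a ≠ b) (hnadj : ¬G.Adj a b) :
    2 ≤ nc G {a, b} := by
  have hmem_a : a ∈ ({a, b} : Set V) := by simp
  have hmem_b : b ∈ ({a, b} : Set V) := by simp
  have noadj : ∀ x y : ↥({a, b} : Set V), ¬(G.induce ({a, b} : Set V)).Adj x y := by
    rintro ⟨x, hx⟩ ⟨y, hy⟩ hadj
    have hxy : G.Adj x y := hadj
    rcases hx with rfl | rfl <;> rcases hy with rfl | rfl
    · exact G.irrefl hxy
    · exact hnadj hxy
    · exact hnadj hxy.symm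
    · exact G.irrefl hxy
  have hbot : G.induce ({a, b} : Set V) = ⊥ := by
    ext x y
    simp only [SimpleGraph.bot_adj, iff_false]
    exact noadj x y
  refine two_le_nc (u := ⟨a, hmem_a⟩) (v := ⟨b, hmem_b⟩) ?_
  intro hr
  rw [hbot, reachable_bot] at hr
  exact hab (congrArg Subtype.val hr)

lemma top_induce_connected {W : Type*} {s : Set W} (hs : s.Nonempty) :
    ((⊤ : SimpleGraph W).induce s).Connected := by
  rw [connected_iff]
  refine ⟨fun u v => ?_, ⟨⟨hs.some, hs.some_mem⟩⟩⟩
  by_cases h : u = v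
  · exact h ▸ Reachable.refl _
  · refine Adj.reachable ?_
    show (u : W) ≠ (v : W)
    exact fun hc => h (Subtype.ext hc)

section Join

variable {V₁ V₂ : Type*} {G₁ : SimpleGraph V₁} {G₂ : SimpleGraph V₂}

lemma joinGraph_connected_induce {s : Set (V₁ ⊕ V₂)}
    (h₁ : ∃ a, Sum.inl a ∈ s) (h₂ : ∃ b, Sum.inr b ∈ s) :
    ((joinGraph G₁ G₂).induce s).Connected := by
  obtain ⟨a, ha⟩ := h₁
  obtain ⟨b, hb⟩ := h₂
  rw [connected_iff]
  refine ⟨?_, ⟨⟨_, ha⟩⟩⟩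
  have key : ∀ x : s, ((joinGraph G₁ G₂).induce s).Reachable x ⟨Sum.inl a, ha⟩ := by
    rintro ⟨(c | c), hc⟩
    · refine Reachable.trans
        (Adj.reachable (G := (joinGraph G₁ G₂).induce s)
          (u := ⟨Sum.inl c, hc⟩) (v := ⟨Sum.inr b, hb⟩) trivial)
        (Adj.reachable (G := (joinGraph G₁ G₂).induce s)
          (u := ⟨Sum.inr b, hb⟩) (v := ⟨Sum.inl a, ha⟩) trivial)
    · exact Adj.reachable (G := (joinGraph G₁ G₂).induce s)
        (u := ⟨Sum.inr c, hc⟩) (v := ⟨Sum.inl a, ha⟩) trivial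
  intro x y
  exact (key x).trans (key y).symm

/-- Subtype equivalence for an `inl` image. -/
def inlSetEquiv (s₀ : Set V₁) : ↥s₀ ≃ ↥(Sum.inl '' s₀ : Set (V₁ ⊕ V₂)) where
  toFun a := ⟨Sum.inl a.1, ⟨a.1, a.2, rfl⟩⟩
  invFun x :=
    match x with
    | ⟨Sum.inl a, h⟩ => ⟨a, by simpa using h⟩
    | ⟨Sum.inr _, h⟩ => absurd h (by simp)
  left_inv a := rfl
  right_inv x := by
    match x with
    | ⟨Sum.inl a, h⟩ => rfl
    | ⟨Sum.inr b, h⟩ => exact absurd h (by simp)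

/-- Subtype equivalence for an `inr` image. -/
def inrSetEquiv (s₀ : Set V₂) : ↥s₀ ≃ ↥(Sum.inr '' s₀ : Set (V₁ ⊕ V₂)) where
  toFun a := ⟨Sum.inr a.1, ⟨a.1, a.2, rfl⟩⟩
  invFun x :=
    match x with
    | ⟨Sum.inr a, h⟩ => ⟨a, by simpa using h⟩
    | ⟨Sum.inl _, h⟩ => absurd h (by simp)
  left_inv a := rfl
  right_inv x := by
    match x with
    | ⟨Sum.inr a, h⟩ => rfl
    | ⟨Sum.inl b, h⟩ => exact absurd h (by simp)

def joinInduceInlIso (G₁ : SimpleGraph V₁) (G₂ : SimpleGraph V₂) (s₀ : Set V₁) :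
    G₁.induce s₀ ≃g (joinGraph G₁ G₂).induce (Sum.inl '' s₀) where
  toEquiv := inlSetEquiv s₀
  map_rel_iff' := by intro u v; exact Iff.rfl

def joinInduceInrIso (G₁ : SimpleGraph V₁) (G₂ : SimpleGraph V₂) (s₀ : Set V₂) :
    G₂.induce s₀ ≃g (joinGraph G₁ G₂).induce (Sum.inr '' s₀) where
  toEquiv := inrSetEquiv s₀
  map_rel_iff' := by intro u v; exact Iff.rfl

lemma nc_join_inl (G₁ : SimpleGraph V₁) (G₂ : SimpleGraph V₂) (s₀ : Set V₁) :
    nc (joinGraph G₁ G₂) (Sum.inl '' s₀) = nc G₁ s₀ :=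
  (nc_congr (joinInduceInlIso G₁ G₂ s₀)).symm

lemma nc_join_inr (G₁ : SimpleGraph V₁) (G₂ : SimpleGraph V₂) (s₀ : Set V₂) :
    nc (joinGraph G₁ G₂) (Sum.inr '' s₀) = nc G₂ s₀ :=
  (nc_congr (joinInduceInrIso G₁ G₂ s₀)).symm

end Join

section SigmaLemmas

variable {ι : Type*} {Vf : ι → Type*}

lemma sigmaGraph_adj_mk {Gf : ∀ i, SimpleGraph (Vf i)} {i : ι} {a b : Vf i}
    (h : (Gf i).Adj a b) : (sigmaGraph Gf).Adj ⟨i, a⟩ ⟨i, b⟩ := ⟨rfl, h⟩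

/-- Connected components of a disjoint union. -/
def sigmaComponentEquiv (Gf : ∀ i, SimpleGraph (Vf i)) :
    (sigmaGraph Gf).ConnectedComponent ≃ Σ i, (Gf i).ConnectedComponent where
  toFun := ConnectedComponent.lift (fun v => ⟨v.1, (Gf v.1).connectedComponentMk v.2⟩)
    (by
      have key : ∀ v w : Σ i, Vf i, (sigmaGraph Gf).Walk v w →
          (⟨v.1, (Gf v.1).connectedComponentMk v.2⟩ : Σ i, (Gf i).ConnectedComponent) =
            ⟨w.1, (Gf w.1).connectedComponentMk w.2⟩ := by
        intro v w p
        induction p with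
        | nil => rfl
        | @cons u x w h p ih =>
          refine Eq.trans ?_ ih
          obtain ⟨i, a⟩ := u
          obtain ⟨i', b⟩ := x
          obtain ⟨he, hadj⟩ := h
          dsimp at he
          subst he
          exact congrArg (fun c => (⟨i, c⟩ : Σ i, (Gf i).ConnectedComponent))
            (ConnectedComponent.sound hadj.reachable)
      intro v w p _
      exact key v w p)
  invFun x := x.2.lift (fun a => (sigmaGraph Gf).connectedComponentMk ⟨x.1, a⟩)
    (by
      have key : ∀ v w : Vf x.1, (Gf x.1).Walk v w →
          (sigmaGraph Gf).connectedComponentMk ⟨x.1, v⟩ =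
            (sigmaGraph Gf).connectedComponentMk ⟨x.1, w⟩ := by
        intro v w p
        induction p with
        | nil => rfl
        | cons h p ih =>
          exact (ConnectedComponent.sound (sigmaGraph_adj_mk h).reachable).trans ih
      intro v w p _
      exact key v w p)
  left_inv := by
    intro c
    refine ConnectedComponent.ind (fun v => ?_) c
    rfl
  right_inv := by
    rintro ⟨i, c⟩
    refine ConnectedComponent.ind (fun a => ?_) c
    rfl

/-- Subtype equivalence for sets in a sigma type. -/
def sigmaSetEquiv (s : Set (Σ i, Vf i)) :
    ↥s ≃ Σ i, ↥{x : Vf i | (⟨i, x⟩ : Σ i, Vf i) ∈ s} where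
  toFun x := ⟨x.1.1, ⟨x.1.2, x.2⟩⟩
  invFun y := ⟨⟨y.1, y.2.1⟩, y.2.2⟩
  left_inv x := rfl
  right_inv y := rfl

def sigmaInduceIso (Gf : ∀ i, SimpleGraph (Vf i)) (s : Set (Σ i, Vf i)) :
    (sigmaGraph Gf).induce s ≃g
      sigmaGraph (fun i => (Gf i).induce {x : Vf i | (⟨i, x⟩ : Σ i, Vf i) ∈ s}) where
  toEquiv := sigmaSetEquiv s
  map_rel_iff' := by
    rintro ⟨⟨i, a⟩, ha⟩ ⟨⟨j, b⟩, hb⟩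
    show (sigmaGraph (fun i => (Gf i).induce {x : Vf i | (⟨i, x⟩ : Σ i, Vf i) ∈ s})).Adj
        ⟨i, ⟨a, ha⟩⟩ ⟨j, ⟨b, hb⟩⟩ ↔ (sigmaGraph Gf).Adj ⟨i, a⟩ ⟨j, b⟩
    constructor
    · rintro ⟨h, hadj⟩
      dsimp at h
      subst h
      exact ⟨rfl, hadj⟩
    · rintro ⟨h, hadj⟩
      dsimp at h
      subst h
      exact ⟨rfl, hadj⟩

lemma my_card_sigma {κ : Type*} [Fintype κ] {A : κ → Type*} [∀ i, Finite (A i)] :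
    Nat.card (Σ i, A i) = ∑ i, Nat.card (A i) := by
  letI : ∀ i, Fintype (A i) := fun i => Fintype.ofFinite _
  simp [Nat.card_eq_fintype_card]

lemma nc_sigma [Fintype ι] [∀ i, Finite (Vf i)] (Gf : ∀ i, SimpleGraph (Vf i))
    (s : Set (Σ i, Vf i)) :
    nc (sigmaGraph Gf) s = ∑ i, nc (Gf i) {x : Vf i | (⟨i, x⟩ : Σ i, Vf i) ∈ s} := by
  unfold nc
  rw [Nat.card_congr
    ((sigmaInduceIso Gf s).connectedComponentEquiv.trans (sigmaComponentEquiv _))]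
  exact my_card_sigma

lemma ncard_sigma [Fintype ι] [∀ i, Finite (Vf i)] (s : Set (Σ i, Vf i)) :
    s.ncard = ∑ i, {x : Vf i | (⟨i, x⟩ : Σ i, Vf i) ∈ s}.ncard := by
  rw [← Nat.card_coe_set_eq, Nat.card_congr (sigmaSetEquiv s), my_card_sigma]
  exact Finset.sum_congr rfl fun i _ => Nat.card_coe_set_eq _

end SigmaLemmas

lemma sum_split_iff {r : ℕ} (f g : Fin r → ℕ) (j : Fin r)
    (hfg : ∀ i, i ≠ j → f i = g i) : (∑ i, f i < ∑ i, g i) ↔ f j < g j := by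
  rw [← Finset.add_sum_erase _ f (Finset.mem_univ j),
    ← Finset.add_sum_erase _ g (Finset.mem_univ j)]
  have he : ∑ i ∈ Finset.univ.erase j, f i = ∑ i ∈ Finset.univ.erase j, g i :=
    Finset.sum_congr rfl fun i hi => hfg i (Finset.ne_of_mem_erase hi)
  omega

lemma sum_single {r : ℕ} (f : Fin r → ℕ) (j : Fin r) (hf : ∀ i, i ≠ j → f i = 1) :
    ∑ i, f i = f j + (r - 1) := by
  rw [← Finset.add_sum_erase _ f (Finset.mem_univ j)]
  have he : ∑ i ∈ Finset.univ.erase j, f i = ∑ i ∈ Finset.univ.erase j, 1 :=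
    Finset.sum_congr rfl fun i hi => hf i (Finset.ne_of_mem_erase hi)
  rw [he, Finset.sum_const, smul_eq_mul, mul_one,
    Finset.card_erase_of_mem (Finset.mem_univ j), Finset.card_univ, Fintype.card_fin]

end Aux

set_option maxHeartbeats 1000000 in
/-- the join of a connected graph `H` on `t` vertices with a disjoint union
of `r ≥ 2` connected graphs is unmixed (Rauf–Rinaldo sense) iff `H` is complete,
`r = t + 1`, and each summand is unmixed. -/
theorem stmt13 {V₀ : Type*} [Fintype V₀] {r : ℕ} (hr : 2 ≤ r)
    {V : Fin r → Type*} [∀ i, Fintype (V i)]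
    (H : SimpleGraph V₀) (Hi : ∀ i, SimpleGraph (V i))
    (hH : H.Connected) (hHi : ∀ i, (Hi i).Connected) :
    (∀ T : Set (V₀ ⊕ Σ i, V i),
        CutPointProperty (joinGraph H (sigmaGraph Hi)) T →
        nc (joinGraph H (sigmaGraph Hi)) Tᶜ = T.ncard + 1) ↔
      (H = ⊤ ∧ r = Fintype.card V₀ + 1 ∧
        ∀ i, ∀ Ti : Set (V i), CutPointProperty (Hi i) Ti →
          nc (Hi i) Tiᶜ = Ti.ncard + 1) := by
  classical
  set G := joinGraph H (sigmaGraph Hi) with hGdef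
  haveI : Nonempty V₀ := hH.nonempty
  haveI hVne : ∀ i, Nonempty (V i) := fun i => (hHi i).nonempty
  haveI : Nonempty (Fin r) := ⟨⟨0, by omega⟩⟩
  haveI : Nonempty (Σ i, V i) := ⟨⟨Classical.arbitrary (Fin r), Classical.arbitrary _⟩⟩
  -- generic fiber computations
  have fibUnion : ∀ (S' P : Set (Σ i, V i)) (i : Fin r),
      {x : V i | (⟨i, x⟩ : Σ i, V i) ∈ S' ∪ P} =
        {x : V i | (⟨i, x⟩ : Σ i, V i) ∈ S'} ∪ {x : V i | (⟨i, x⟩ : Σ i, V i) ∈ P} :=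
    fun _ _ _ => rfl
  have fibCompl : ∀ (S' : Set (Σ i, V i)) (i : Fin r),
      {x : V i | (⟨i, x⟩ : Σ i, V i) ∈ S'ᶜ} = {x : V i | (⟨i, x⟩ : Σ i, V i) ∈ S'}ᶜ :=
    fun _ _ => rfl
  have fibSing : ∀ (j : Fin r) (y : V j),
      {x : V j | (⟨j, x⟩ : Σ i, V i) ∈ ({⟨j, y⟩} : Set (Σ i, V i))} = {y} := by
    intro j y
    ext x
    simp only [Set.mem_setOf_eq, Set.mem_singleton_iff]
    constructor
    · intro h
      exact sigma_mk_injective h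
    · rintro rfl
      rfl
  have fibSingNe : ∀ (j i : Fin r), i ≠ j → ∀ (y : V j),
      {x : V i | (⟨i, x⟩ : Σ i, V i) ∈ ({⟨j, y⟩} : Set (Σ i, V i))} = ∅ := by
    intro j i hij y
    ext x
    simp only [Set.mem_setOf_eq, Set.mem_singleton_iff, Set.mem_empty_iff_false, iff_false]
    intro h
    exact hij (congrArg Sigma.fst h)
  -- basic counting facts
  have hcomplL : (Set.range (Sum.inl : V₀ → V₀ ⊕ Σ i, V i))ᶜ = Set.range Sum.inr :=
    Set.compl_range_inl
  have hncardL : (Set.range (Sum.inl : V₀ → V₀ ⊕ Σ i, V i)).ncard = Fintype.card V₀ := by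
    rw [← Set.image_univ, Set.ncard_image_of_injective _ Sum.inl_injective, Set.ncard_univ,
      Nat.card_eq_fintype_card]
  have hncR : ∀ S : Set (Σ i, V i),
      nc G (Sum.inr '' S) = ∑ i, nc (Hi i) {x : V i | (⟨i, x⟩ : Σ i, V i) ∈ S} := by
    intro S
    rw [hGdef, nc_join_inr, nc_sigma]
  have hnc1 : ∀ i, nc (Hi i) Set.univ = 1 := fun i => nc_univ_eq_one (hHi i)
  have hncRuniv : nc G (Set.range Sum.inr) = r := by
    rw [← Set.image_univ, hncR]
    have huniv : ∀ i : Fin r,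
        {x : V i | (⟨i, x⟩ : Σ i, V i) ∈ (Set.univ : Set (Σ i, V i))} = Set.univ :=
      fun _ => rfl
    simp [huniv, hnc1]
  have hmixed : ∀ s : Set (V₀ ⊕ Σ i, V i), (∃ a, Sum.inl a ∈ s) → (∃ b, Sum.inr b ∈ s) →
      nc G s = 1 :=
    fun s h1 h2 => nc_eq_one_of_connected (joinGraph_connected_induce h1 h2)
  have hN : r ≤ Fintype.card (Σ i, V i) := by
    rw [Fintype.card_sigma]
    calc r = ∑ _i : Fin r, 1 := by simp
    _ ≤ ∑ i, Fintype.card (V i) := Finset.sum_le_sum fun i _ => Fintype.card_pos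
  constructor
  · -- forward direction
    intro hU
    have hrt : r = Fintype.card V₀ + 1 := by
      have hcp : CutPointProperty G (Set.range Sum.inl) := by
        rintro i hi
        obtain ⟨a, rfl⟩ := hi
        rw [hcomplL]
        have h1 : nc G (Set.range Sum.inr ∪ {Sum.inl a}) = 1 :=
          hmixed _ ⟨a, Set.mem_union_right _ rfl⟩
            ⟨Classical.arbitrary _, Set.mem_union_left _ (Set.mem_range_self _)⟩
        rw [h1, hncRuniv]
        omega
      have := hU _ hcp
      rw [hcomplL, hncRuniv, hncardL] at this
      exact this
    have hUi : ∀ j, ∀ Tj : Set (V j), CutPointProperty (Hi j) Tj →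
        nc (Hi j) Tjᶜ = Tj.ncard + 1 := by
      intro j Tj hTj
      have hTjc : Tjᶜ.Nonempty := by
        rw [Set.nonempty_iff_ne_empty]
        intro h
        obtain ⟨x⟩ := hVne j
        have hx : x ∈ Tj := by
          have huniv : Tj = Set.univ := by rwa [Set.compl_empty_iff] at h
          exact huniv ▸ Set.mem_univ x
        have hlt := hTj x hx
        rw [h, nc_empty] at hlt
        omega
      set S : Set (Σ i, V i) := Sigma.mk j '' Tj with hS
      set T : Set (V₀ ⊕ Σ i, V i) := Set.range Sum.inl ∪ Sum.inr '' S with hT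
      have hTc : Tᶜ = Sum.inr '' Sᶜ := by
        ext (x | x) <;> simp [hT]
      have fibS : ∀ i : Fin r, i ≠ j → {x : V i | (⟨i, x⟩ : Σ i, V i) ∈ S} = ∅ := by
        intro i hij
        ext x
        simp only [hS, Set.mem_setOf_eq, Set.mem_image, Set.mem_empty_iff_false, iff_false,
          not_exists, not_and]
        intro a _ h
        exact hij (congrArg Sigma.fst h).symm
      have fibSj : {x : V j | (⟨j, x⟩ : Σ i, V i) ∈ S} = Tj := by
        ext x
        simp only [hS, Set.mem_setOf_eq, Set.mem_image]
        constructor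
        · rintro ⟨a, ha, h⟩
          obtain rfl := sigma_mk_injective h
          exact ha
        · exact fun hx => ⟨x, hx, rfl⟩
      have hncTc : nc G Tᶜ = nc (Hi j) Tjᶜ + (r - 1) := by
        rw [hTc, hncR, sum_single (fun i => nc (Hi i) {x : V i | (⟨i, x⟩ : Σ i, V i) ∈ Sᶜ}) j
          (fun i hij => by
            show nc (Hi i) {x : V i | (⟨i, x⟩ : Σ i, V i) ∈ Sᶜ} = 1
            rw [fibCompl, fibS i hij, Set.compl_empty]
            exact hnc1 i)]
        rw [fibCompl, fibSj]
      have hcp : CutPointProperty G T := by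
        rintro (a | p) hp
        · have h1 : nc G (Tᶜ ∪ {Sum.inl a}) = 1 := by
            obtain ⟨y, hy⟩ := hTjc
            have hyS : (⟨j, y⟩ : Σ i, V i) ∈ Sᶜ := fun hmem => hy (fibSj ▸ hmem)
            refine hmixed _ ⟨a, Set.mem_union_right _ rfl⟩ ⟨⟨j, y⟩, Set.mem_union_left _ ?_⟩
            rw [hTc]
            exact ⟨⟨j, y⟩, hyS, rfl⟩
          rw [h1, hncTc]
          have hpos : 1 ≤ nc (Hi j) Tjᶜ := nc_pos hTjc
          omega
        · have hpS : p ∈ S := by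
            rcases hp with ⟨a, ha⟩ | ⟨q, hq, hqe⟩
            · exact absurd ha (Sum.inl_ne_inr)
            · obtain rfl := Sum.inr_injective hqe
              exact hq
          rw [hS] at hpS
          obtain ⟨x, hx, rfl⟩ := hpS
          have himg : Tᶜ ∪ {Sum.inr (⟨j, x⟩ : Σ i, V i)} = Sum.inr '' (Sᶜ ∪ {⟨j, x⟩}) := by
            rw [hTc, Set.image_union, Set.image_singleton]
          rw [himg, hncTc, hncR,
            sum_single (fun i => nc (Hi i) {x' : V i | (⟨i, x'⟩ : Σ i, V i) ∈ Sᶜ ∪ {⟨j, x⟩}}) j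
              (fun i hij => by
                show nc (Hi i) {x' : V i | (⟨i, x'⟩ : Σ i, V i) ∈ Sᶜ ∪ {⟨j, x⟩}} = 1
                rw [fibUnion, fibCompl, fibS i hij, fibSingNe j i hij x, Set.compl_empty,
                  Set.union_empty]
                exact hnc1 i)]
          have hfib : {x' : V j | (⟨j, x'⟩ : Σ i, V i) ∈ Sᶜ ∪ {⟨j, x⟩}} = Tjᶜ ∪ {x} := by
            rw [fibUnion, fibCompl, fibSj, fibSing]
          rw [hfib]
          exact Nat.add_lt_add_right (hTj x hx) _
      have hres := hU T hcp
      rw [hncTc] at hres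
      have hcardT : T.ncard = Fintype.card V₀ + Tj.ncard := by
        rw [hT, Set.ncard_union_eq ?_ (Set.toFinite _) (Set.toFinite _), hncardL]
        · congr 1
          rw [Set.ncard_image_of_injective _ Sum.inr_injective, hS,
            Set.ncard_image_of_injective _ sigma_mk_injective]
        · rw [Set.disjoint_left]
          rintro _ ⟨a, rfl⟩ ⟨q, _, hq⟩
          exact Sum.inl_ne_inr hq.symm
      rw [hcardT] at hres
      omega
    refine ⟨?_, hrt, hUi⟩
    by_contra hne
    have hpair : ∃ a b : V₀, a ≠ b ∧ ¬H.Adj a b := by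
      by_contra hc
      push_neg at hc
      apply hne
      ext a b
      simp only [SimpleGraph.top_adj]
      exact ⟨fun h => h.ne, fun h => hc a b h⟩
    obtain ⟨a, b, hab, hnadj⟩ := hpair
    have hex : ∃ n, ∃ A : Set V₀, 2 ≤ nc H Aᶜ ∧ A.ncard = n := by
      refine ⟨_, ({a, b} : Set V₀)ᶜ, ?_, rfl⟩
      rw [compl_compl]
      exact two_le_nc_pair hab hnadj
    obtain ⟨A, hA2, hAn⟩ := Nat.find_spec hex
    have hmin : ∀ B : Set V₀, B ⊂ A → nc H Bᶜ ≤ 1 := by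
      intro B hB
      by_contra hc
      push_neg at hc
      have hlt : B.ncard < Nat.find hex := by
        rw [← hAn]
        exact Set.ncard_lt_ncard hB (Set.toFinite _)
      exact Nat.find_min hex hlt ⟨B, hc, rfl⟩
    set T : Set (V₀ ⊕ Σ i, V i) := Set.range Sum.inr ∪ Sum.inl '' A with hT
    have hTc : Tᶜ = Sum.inl '' Aᶜ := by
      ext (x | x) <;> simp [hT]
    have hAc : Aᶜ.Nonempty := by
      rw [Set.nonempty_iff_ne_empty]
      intro h
      rw [h, nc_empty] at hA2
      omega
    have hncTc : nc G Tᶜ = nc H Aᶜ := by rw [hTc, hGdef, nc_join_inl]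
    have hcp : CutPointProperty G T := by
      rintro (s' | p) hp
      · have hsA : s' ∈ A := by
          rcases hp with ⟨q, hq⟩ | ⟨q, hq, hqe⟩
          · exact absurd hq Sum.inr_ne_inl
          · obtain rfl := Sum.inl_injective hqe
            exact hq
        have himg : Tᶜ ∪ {Sum.inl s'} = Sum.inl '' (Aᶜ ∪ {s'}) := by
          rw [hTc, Set.image_union, Set.image_singleton]
        have hsub : Aᶜ ∪ {s'} = (A \ {s'})ᶜ := by
          rw [Set.diff_eq, Set.compl_inter, compl_compl]
        rw [himg, hGdef, nc_join_inl, hsub, hncTc]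
        have hss : A \ {s'} ⊂ A := Set.sdiff_singleton_ssubset.mpr hsA
        have := hmin _ hss
        omega
      · have h1 : nc G (Tᶜ ∪ {Sum.inr p}) = 1 := by
          refine hmixed _ ⟨hAc.some, Set.mem_union_left _ ?_⟩ ⟨p, Set.mem_union_right _ rfl⟩
          rw [hTc]
          exact ⟨hAc.some, hAc.some_mem, rfl⟩
        rw [h1, hncTc]
        omega
    have hfin := hU T hcp
    rw [hncTc] at hfin
    have hcardT : T.ncard = Fintype.card (Σ i, V i) + A.ncard := by
      rw [hT, Set.ncard_union_eq ?_ (Set.toFinite _) (Set.toFinite _)]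
      · congr 1
        · rw [← Set.image_univ, Set.ncard_image_of_injective _ Sum.inr_injective,
            Set.ncard_univ, Nat.card_eq_fintype_card]
        · exact Set.ncard_image_of_injective _ Sum.inl_injective
      · rw [Set.disjoint_left]
        rintro _ ⟨q, rfl⟩ ⟨q', _, hq'⟩
        exact Sum.inl_ne_inr hq'
    have hle : nc H Aᶜ ≤ Aᶜ.ncard := nc_le_ncard H Aᶜ
    have hAcompl : Aᶜ.ncard + A.ncard = Fintype.card V₀ := by
      rw [add_comm, Set.ncard_add_ncard_compl, Nat.card_eq_fintype_card]
    rw [hcardT] at hfin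
    omega
  · -- backward direction
    rintro ⟨hHtop, hrt, hUi⟩ T hT
    by_cases hTe : T = ∅
    · subst hTe
      rw [Set.compl_empty,
        hmixed _ ⟨Classical.arbitrary V₀, Set.mem_univ _⟩
          ⟨Classical.arbitrary _, Set.mem_univ _⟩]
      simp
    obtain ⟨i₀, hi₀⟩ := Set.nonempty_iff_ne_empty.mpr hTe
    by_cases hTuniv : Tᶜ = ∅
    · exfalso
      have hlt := hT i₀ hi₀
      rw [hTuniv, nc_empty] at hlt
      omega
    by_cases hmixc : (∃ a, Sum.inl a ∈ Tᶜ) ∧ (∃ p, Sum.inr p ∈ Tᶜ)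
    · exfalso
      have h2 : nc G Tᶜ = 1 := hmixed _ hmixc.1 hmixc.2
      have h3 : nc G (Tᶜ ∪ {i₀}) = 1 :=
        hmixed _ (hmixc.1.imp fun a ha => Set.mem_union_left _ ha)
          (hmixc.2.imp fun p hp => Set.mem_union_left _ hp)
      have := hT i₀ hi₀
      omega
    rw [not_and_or] at hmixc
    push_neg at hmixc
    rcases hmixc with hnoL | hnoR
    · -- Tᶜ is contained in the right side
      set S : Set (Σ i, V i) := Sum.inr ⁻¹' Tᶜ with hS
      have hTcR : Tᶜ = Sum.inr '' S := by
        ext (x | x)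
        · simp [hnoL x]
        · simp [hS]
      have hcpj : ∀ j : Fin r,
          CutPointProperty (Hi j) ({x : V j | (⟨j, x⟩ : Σ i, V i) ∈ S}ᶜ) := by
        intro j x hx
        have hmemT : Sum.inr (⟨j, x⟩ : Σ i, V i) ∈ T := by
          by_contra hc
          exact hx (show (⟨j, x⟩ : Σ i, V i) ∈ S from hc)
        have hlt := hT _ hmemT
        rw [hTcR] at hlt
        have himg : (Sum.inr '' S ∪ {Sum.inr (⟨j, x⟩ : Σ i, V i)} : Set (V₀ ⊕ Σ i, V i)) =
            Sum.inr '' (S ∪ {⟨j, x⟩}) := by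
          rw [Set.image_union, Set.image_singleton]
        rw [himg, hncR, hncR] at hlt
        have hfg : ∀ i : Fin r, i ≠ j →
            nc (Hi i) {x' : V i | (⟨i, x'⟩ : Σ i, V i) ∈ S ∪ {⟨j, x⟩}} =
              nc (Hi i) {x' : V i | (⟨i, x'⟩ : Σ i, V i) ∈ S} := by
          intro i hij
          rw [fibUnion, fibSingNe j i hij x, Set.union_empty]
        have key := (sum_split_iff _ _ j hfg).mp hlt
        have hfib : {x' : V j | (⟨j, x'⟩ : Σ i, V i) ∈ S ∪ {⟨j, x⟩}} =
            {x' : V j | (⟨j, x'⟩ : Σ i, V i) ∈ S} ∪ {x} := by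
          rw [fibUnion, fibSing]
        rw [hfib] at key
        rw [compl_compl]
        exact key
      have hsum : nc G Tᶜ =
          (∑ j, ({x : V j | (⟨j, x⟩ : Σ i, V i) ∈ S}ᶜ).ncard) + r := by
        rw [hTcR, hncR]
        have hterm : ∀ j : Fin r, nc (Hi j) {x : V j | (⟨j, x⟩ : Σ i, V i) ∈ S} =
            ({x : V j | (⟨j, x⟩ : Σ i, V i) ∈ S}ᶜ).ncard + 1 := by
          intro j
          have h := hUi j _ (hcpj j)
          rwa [compl_compl] at h
        rw [Finset.sum_congr rfl fun j _ => hterm j, Finset.sum_add_distrib,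
          Finset.sum_const, smul_eq_mul, mul_one, Finset.card_univ, Fintype.card_fin]
      have hP : Tᶜ.ncard = ∑ j, {x : V j | (⟨j, x⟩ : Σ i, V i) ∈ S}.ncard := by
        rw [hTcR, Set.ncard_image_of_injective _ Sum.inr_injective, ncard_sigma]
      have hQPsum : (∑ j, ({x : V j | (⟨j, x⟩ : Σ i, V i) ∈ S}ᶜ).ncard) +
          (∑ j, {x : V j | (⟨j, x⟩ : Σ i, V i) ∈ S}.ncard) = Fintype.card (Σ i, V i) := by
        rw [← Finset.sum_add_distrib, Fintype.card_sigma]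
        refine Finset.sum_congr rfl fun j _ => ?_
        rw [add_comm, Set.ncard_add_ncard_compl, Nat.card_eq_fintype_card]
      have hTT : T.ncard + Tᶜ.ncard = Fintype.card (V₀ ⊕ Σ i, V i) := by
        rw [Set.ncard_add_ncard_compl, Nat.card_eq_fintype_card]
      have hcardW : Fintype.card (V₀ ⊕ Σ i, V i) =
          Fintype.card V₀ + Fintype.card (Σ i, V i) := Fintype.card_sum
      omega
    · -- Tᶜ is contained in the left side: contradiction with completeness
      exfalso
      have hTcL : Tᶜ = Sum.inl '' (Sum.inl ⁻¹' Tᶜ) := by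
        ext (x | x)
        · simp
        · simp [hnoR x]
      have hpre : (Sum.inl ⁻¹' Tᶜ : Set V₀).Nonempty := by
        rw [Set.nonempty_iff_ne_empty]
        intro h
        rw [h, Set.image_empty] at hTcL
        exact hTuniv hTcL
      have hconn : nc G Tᶜ = 1 := by
        rw [hTcL, hGdef, nc_join_inl, hHtop]
        exact nc_eq_one_of_connected (top_induce_connected hpre)
      have hlt := hT i₀ hi₀
      have h1 : 1 ≤ nc G (Tᶜ ∪ {i₀}) := nc_pos ⟨i₀, Set.mem_union_right _ rfl⟩
      omega
end

section
/- Let $1 \leq n_1 \leq \cdots \leq n_t$ be integers and let $K_{n_1,\ldots,n_t}$ be the complete $t$-partite graph. Then the Krull dimension of $S/J_{K_{n_1,\ldots,n_t}}$, where $S = K[x_1,\ldots,x_n,y_1,\ldots,y_n]$ with $n = \sum_i n_i$ and $J_G$ is the binomial edge ideal, satisfies $\dim S/J_{K_{n_1,\ldots,n_t}} = \max\{\sum_{i=1}^t n_i + 1,\; 2 n_t\}$. Equivalently, combinatorially, $\max\{n - |T| + c(T) : T \subseteq [n]\} = \max\{n+1, 2n_t\}$, where $c(T)$ is the number of connected components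 of the induced subgraph on $[n]\setminus T$. -/
open SimpleGraph Set

/-- The complete multipartite graph on `Σ i, Fin (n i)`: vertices are adjacent iff they
lie in different parts. -/
def completeMultipartite {t : ℕ} (n : Fin t → ℕ) : SimpleGraph (Σ i, Fin (n i)) where
  Adj v w := v.1 ≠ w.1
  symm := ⟨fun _ _ h => h.symm⟩
  loopless := ⟨fun _ h => h rfl⟩

lemma nc_eq_one {V : Type*} (G : SimpleGraph V) (s : Set V)
    (h : (G.induce s).Connected) : nc G s = 1 := by
  rw [nc, Nat.card_eq_one_iff_unique]
  have : Nonempty ↥s := h.nonempty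
  have hne : Nonempty ↥s := h.nonempty
  exact ⟨h.preconnected.subsingleton_connectedComponent,
    ⟨(G.induce s).connectedComponentMk hne.some⟩⟩

lemma card_cc_bot (α : Type*) :
    Nat.card ((⊥ : SimpleGraph α).ConnectedComponent) = Nat.card α := by
  refine Nat.card_congr ⟨Quot.lift id (fun a b h => reachable_bot.mp h), Quot.mk _,
    fun c => Quot.inductionOn c (fun a => rfl), fun a => rfl⟩

lemma nc_eq_card {V : Type*} (G : SimpleGraph V) (s : Set V)
    (h : ∀ v ∈ s, ∀ w ∈ s, ¬ G.Adj v w) : nc G s = s.ncard := by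
  have hbot : G.induce s = ⊥ := by
    ext ⟨v, hv⟩ ⟨w, hw⟩
    simp only [comap_adj, Function.Embedding.coe_subtype, bot_adj, iff_false]
    exact h v hv w hw
  rw [nc, hbot, card_cc_bot, Nat.card_coe_set_eq]

lemma part_ncard {t : ℕ} (n : Fin t → ℕ) (j : Fin t) :
    {v : Σ i, Fin (n i) | v.1 = j}.ncard = n j := by
  rw [← Nat.card_coe_set_eq]
  have e : {v : Σ i, Fin (n i) | v.1 = j} ≃ Fin (n j) :=
    { toFun := fun v => v.2 ▸ v.1.2
      invFun := fun a => ⟨⟨j, a⟩, rfl⟩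
      left_inv := by rintro ⟨⟨i, a⟩, rfl⟩; rfl
      right_inv := fun a => rfl }
  rw [Nat.card_congr e, Nat.card_eq_fintype_card, Fintype.card_fin]

lemma cm_connected {t : ℕ} (n : Fin t → ℕ) (s : Set (Σ i, Fin (n i)))
    (a b : Σ i, Fin (n i)) (ha : a ∈ s) (hb : b ∈ s) (hab : a.1 ≠ b.1) :
    ((completeMultipartite n).induce s).Connected := by
  rw [connected_iff]
  refine ⟨fun u v => ?_, ⟨⟨a, ha⟩⟩⟩
  by_cases huv : u.1.1 = v.1.1
  · obtain ⟨w, hw, hwv⟩ : ∃ w, w ∈ s ∧ w.1 ≠ u.1.1 := by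
      by_cases hau : a.1 = u.1.1
      · exact ⟨b, hb, fun h => hab (hau.trans h.symm)⟩
      · exact ⟨a, ha, hau⟩
    have h1 : ((completeMultipartite n).induce s).Adj u ⟨w, hw⟩ :=
      show u.1.1 ≠ w.1 from fun h => hwv h.symm
    have h2 : ((completeMultipartite n).induce s).Adj ⟨w, hw⟩ v := show w.1 ≠ v.1.1 from fun h =>
      hwv (h.trans huv.symm)
    exact (h1.reachable).trans h2.reachable
  · exact (Adj.reachable (show ((completeMultipartite n).induce s).Adj u v from huv))


/-- combinatorial form: for `1 ≤ n 0 ≤ ⋯ ≤ n t`, the maximum of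
`N - |T| + c(T)` over all vertex subsets `T` of the complete multipartite graph equals
`max (N + 1) (2 * n (Fin.last t))`, where `N = ∑ i, n i`. -/
theorem stmt18 {t : ℕ} (n : Fin (t + 1) → ℕ) (hmono : Monotone n)
    (hpos : ∀ i, 1 ≤ n i) :
    IsGreatest
      {k : ℕ | ∃ T : Set (Σ i, Fin (n i)),
        k = (∑ i, n i) - T.ncard + nc (completeMultipartite n) Tᶜ}
      (max ((∑ i, n i) + 1) (2 * n (Fin.last t))) := by
  have hN : Nat.card (Σ i, Fin (n i)) = ∑ i, n i := by
    simp [Nat.card_eq_fintype_card, Fintype.card_sigma]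
  have hle : n (Fin.last t) ≤ ∑ i, n i :=
    Finset.single_le_sum (f := n) (fun i _ => Nat.zero_le _) (Finset.mem_univ _)
  constructor
  · -- membership
    by_cases h0 : t ≠ 0 ∧ 2 * n (Fin.last t) ≤ (∑ i, n i) + 1
    · -- take T = ∅
      refine ⟨∅, ?_⟩
      have ht : (0 : Fin (t + 1)) ≠ Fin.last t := by
        simp [Fin.ext_iff]; omega
      have hc : nc (completeMultipartite n) (∅ : Set _)ᶜ = 1 := by
        rw [compl_empty]
        exact nc_eq_one _ _ (cm_connected n _ ⟨0, ⟨0, hpos 0⟩⟩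
          ⟨Fin.last t, ⟨0, hpos _⟩⟩ trivial trivial ht)
      rw [hc, Set.ncard_empty]
      omega
    · -- take T = complement of the last part
      refine ⟨{v : Σ i, Fin (n i) | v.1 = Fin.last t}ᶜ, ?_⟩
      have hc : nc (completeMultipartite n) {v : Σ i, Fin (n i) | v.1 = Fin.last t}ᶜᶜ
          = n (Fin.last t) := by
        rw [compl_compl, nc_eq_card, part_ncard]
        intro v hv w hw hadj
        exact (show v.1 ≠ w.1 from hadj) (hv.trans hw.symm)
      have hT : ({v : Σ i, Fin (n i) | v.1 = Fin.last t}ᶜ).ncard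
          = (∑ i, n i) - n (Fin.last t) := by
        have := Set.ncard_add_ncard_compl {v : Σ i, Fin (n i) | v.1 = Fin.last t}
        rw [part_ncard, hN] at this
        omega
      have hbig : (∑ i, n i) + 1 ≤ 2 * n (Fin.last t) := by
        rcases Nat.eq_zero_or_pos t with ht | ht
        · subst ht
          have : (∑ i, n i) = n (Fin.last 0) := by
            simp [Fin.sum_univ_one]
          have := hpos (Fin.last 0)
          omega
        · push_neg at h0
          have := h0 (by omega)
          omega
      rw [hc, hT]
      omega
  · -- upper bound
    rintro k ⟨T, rfl⟩
    have hsum : T.ncard + Tᶜ.ncard = ∑ i, n i := by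
      rw [Set.ncard_add_ncard_compl, hN]
    by_cases hpart : ∃ a ∈ Tᶜ, ∃ b ∈ Tᶜ, a.1 ≠ b.1
    · obtain ⟨a, ha, b, hb, hab⟩ := hpart
      rw [nc_eq_one _ _ (cm_connected n _ a b ha hb hab)]
      have : (∑ i, n i) - T.ncard ≤ ∑ i, n i := Nat.sub_le _ _
      exact le_max_of_le_left (by omega)
    · push_neg at hpart
      have hnc : nc (completeMultipartite n) Tᶜ = Tᶜ.ncard :=
        nc_eq_card _ _ (fun v hv w hw hadj => (show v.1 ≠ w.1 from hadj) (hpart v hv w hw))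
      rcases Set.eq_empty_or_nonempty Tᶜ with he | ⟨v0, hv0⟩
      · rw [hnc, he, Set.ncard_empty]
        rw [he, Set.ncard_empty] at hsum
        exact le_max_of_le_left (by omega)
      · have hsub : Tᶜ ⊆ {v : Σ i, Fin (n i) | v.1 = v0.1} :=
          fun w hw => (hpart w hw v0 hv0)
        have h1 : Tᶜ.ncard ≤ n v0.1 :=
          (Set.ncard_le_ncard hsub (Set.toFinite _)).trans_eq (part_ncard n v0.1)
        have h2 : n v0.1 ≤ n (Fin.last t) := hmono (Fin.le_last _)
        rw [hnc]
        exact le_max_of_le_right (by omega)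
end
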